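/- arXiv:2405.06938 — 3 statements merged into one kernel-verified Lean document; each statement's English description precedes it below -/
import Mathlib

section
/- Let Φ, Ψ : ℝ → Z be continuous functions into a metric space Z. If 𝔐_Ψ ⊆ 𝔐_Φ, then 𝔑_Ψ ⊆ 𝔑_Φ; that is, uniform comparability by character of recurrence implies comparability. -/
open Filter Topology

/-- Composing a locally uniformly convergent sequence with a map tending to `atTop`. -/
lemma tlu_comp {Z : Type*} [MetricSpace Z] {F : ℕ → ℝ → Z} {f : ℝ → Z}
    (h : TendstoLocallyUniformly F f atTop) {φ : ℕ → ℕ}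
    (hφ : Tendsto φ atTop atTop) :
    TendstoLocallyUniformly (fun n => F (φ n)) f atTop := by
  intro u hu x
  obtain ⟨s, hs, hev⟩ := h u hu x
  exact ⟨s, hs, hφ.eventually hev⟩

/-- Theorem 2.5(1): uniform comparability by character of recurrence implies
comparability: if every sequence of shifts along which the translates of `Ψ`
converge locally uniformly (to some continuous limit) is also a sequence along which the
translates of `Φ` converge locally uniformly, then every sequence of shifts along which
`Ψ^{t_n} → Ψ` locally uniformly is a sequence along which `Φ^{t_n} → Φ` locally uniformly. -/
theorem comparable_of_uniformlyComparable {Z : Type*} [MetricSpace Z]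
    (Φ Ψ : ℝ → Z) (hΦ : Continuous Φ) (hΨ : Continuous Ψ)
    (hMM : ∀ t : ℕ → ℝ,
      (∃ g : ℝ → Z, Continuous g ∧
        TendstoLocallyUniformly (fun n s => Ψ (s + t n)) g atTop) →
      (∃ g : ℝ → Z, Continuous g ∧
        TendstoLocallyUniformly (fun n s => Φ (s + t n)) g atTop)) :
    ∀ t : ℕ → ℝ,
      TendstoLocallyUniformly (fun n s => Ψ (s + t n)) Ψ atTop →
      TendstoLocallyUniformly (fun n s => Φ (s + t n)) Φ atTop := by
  intro t ht
  -- interleave `t` with the zero sequence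
  set u : ℕ → ℝ := fun n => if Even n then t (n / 2) else 0 with hu_def
  have hu : TendstoLocallyUniformly (fun n s => Ψ (s + u n)) Ψ atTop := by
    intro U hU x
    obtain ⟨s, hs, hev⟩ := ht U hU x
    refine ⟨s, hs, ?_⟩
    obtain ⟨N, hN⟩ := eventually_atTop.1 hev
    refine eventually_atTop.2 ⟨2 * N, fun n hn y hy => ?_⟩
    by_cases he : Even n
    · simp only [hu_def, he, if_pos]
      exact hN (n / 2) (by omega) y hy
    · simp only [hu_def, he, if_neg, not_false_iff, add_zero]
      exact refl_mem_uniformity hU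
  obtain ⟨g, hg, hgc⟩ := hMM u ⟨Ψ, hΨ, hu⟩
  -- the odd subsequence shows g = Φ
  have hgΦ : g = Φ := by
    funext x
    have h1 : Tendsto (fun n => Φ (x + u n)) atTop (𝓝 (g x)) := ((tendstoLocallyUniformlyOn_univ.2 hgc).tendsto_at (Set.mem_univ x))
    have h2 : Tendsto (fun m : ℕ => 2 * m + 1) atTop atTop :=
      tendsto_atTop_atTop.2 fun b => ⟨b, fun a ha => by omega⟩
    have h3 : Tendsto (fun m : ℕ => Φ (x + u (2 * m + 1))) atTop (𝓝 (g x)) := h1.comp h2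
    have h4 : (fun m : ℕ => Φ (x + u (2 * m + 1))) = fun _ => Φ x := by
      funext m
      have : ¬ Even (2 * m + 1) := by simp [Nat.even_add_one]
      simp [hu_def, this]
    rw [h4] at h3
    exact tendsto_nhds_unique h3 tendsto_const_nhds
  -- the even subsequence gives the conclusion
  have h5 : Tendsto (fun n : ℕ => 2 * n) atTop atTop :=
    tendsto_atTop_atTop.2 fun b => ⟨b, fun a ha => by omega⟩
  have h6 := tlu_comp hgc h5
  have h7 : (fun n (s : ℝ) => Φ (s + u (2 * n))) = fun n s => Φ (s + t n) := by
    funext n s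
    have : Even (2 * n) := even_two_mul n
    simp [hu_def, this]
  rw [h7, hgΦ] at h6
  exact h6
end

section
/- Let Φ, Ψ : ℝ → Z be continuous functions into a metric space Z. If 𝔐ᵘ_Ψ ⊆ 𝔐ᵘ_Φ, then 𝔑ᵘ_Ψ ⊆ 𝔑ᵘ_Φ, where the superscript u refers to uniform convergence on all of ℝ. -/
open Filter

/-- Theorem 2.5(2): if every sequence of shifts along which the translates of `Ψ`
converge uniformly on all of `ℝ` (to some limit) is also a sequence along which the
translates of `Φ` converge uniformly, then every sequence of shifts with
`Ψ^{t_n} → Ψ` uniformly on `ℝ` is a sequence with `Φ^{t_n} → Φ` uniformly on `ℝ`. -/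
theorem comparableUniform_of_uniformlyComparableUniform {Z : Type*} [MetricSpace Z]
    (Φ Ψ : ℝ → Z) (hΦ : Continuous Φ) (hΨ : Continuous Ψ)
    (hMM : ∀ t : ℕ → ℝ,
      (∃ g : ℝ → Z, TendstoUniformly (fun n s => Ψ (s + t n)) g atTop) →
      (∃ g : ℝ → Z, TendstoUniformly (fun n s => Φ (s + t n)) g atTop)) :
    ∀ t : ℕ → ℝ,
      TendstoUniformly (fun n s => Ψ (s + t n)) Ψ atTop →
      TendstoUniformly (fun n s => Φ (s + t n)) Φ atTop := by
  intro t ht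
  -- interleave t with the zero shift
  set u : ℕ → ℝ := fun n => if n % 2 = 0 then t (n / 2) else 0 with hu
  have hU : TendstoUniformly (fun n s => Ψ (s + u n)) Ψ atTop := by
    rw [Metric.tendstoUniformly_iff] at ht ⊢
    intro ε hε
    obtain ⟨N, hN⟩ := (ht ε hε).exists_forall_of_atTop
    filter_upwards [eventually_ge_atTop (2 * N)] with n hn x
    by_cases h : n % 2 = 0
    · simp only [hu, h, if_pos]
      exact hN (n / 2) (by omega) x
    · simp only [hu, h, if_neg, if_false, add_zero]
      simpa using hε
  obtain ⟨g, hg⟩ := hMM u ⟨Ψ, hU⟩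
  rw [Metric.tendstoUniformly_iff] at hg
  have hgΦ : g = Φ := by
    funext x
    refine eq_of_forall_dist_le fun ε hε => ?_
    obtain ⟨N, hN⟩ := (hg ε hε).exists_forall_of_atTop
    have h1 : (2 * N + 1) % 2 = 1 := by omega
    have := hN (2 * N + 1) (by omega) x
    simp only [hu, h1] at this
    simpa using this.le
  rw [Metric.tendstoUniformly_iff]
  intro ε hε
  obtain ⟨N, hN⟩ := (hg ε hε).exists_forall_of_atTop
  filter_upwards [eventually_ge_atTop N] with n hn x
  have h2 : (2 * n) % 2 = 0 := by omega
  have := hN (2 * n) (by omega) x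
  simp only [hu, h2, if_pos] at this
  rw [hgΦ] at this
  simpa using this
end

section
/- Let τ > 0, η ≥ 0, let π be a Borel probability measure on the interval [−τ, 0], and let h : ℝ → [0, ∞] be measurable. Then for all real numbers s ≤ t: ∫_s^t ∫_{[−τ,0]} e^{ηr} h(r+θ) dπ(θ) dr ≤ e^{ητ} ∫_{s−τ}^t e^{ηr} h(r) dr. -/
open MeasureTheory Real

/-- Inequality (22): for a delay `τ > 0`, `η ≥ 0`, a probability measure `pm` on
`[-τ, 0]` and a nonnegative measurable function `h`,
`∫_s^t ∫_{[-τ,0]} e^{ηr} h(r+θ) dpm(θ) dr ≤ e^{ητ} ∫_{s-τ}^t e^{ηr} h(r) dr`. -/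
theorem delay_exchange_estimate (τ η : ℝ) (hτ : 0 < τ) (hη : 0 ≤ η)
    (pm : Measure ℝ) [IsProbabilityMeasure pm] (hpm : pm (Set.Icc (-τ) 0)ᶜ = 0)
    (h : ℝ → ENNReal) (hh : Measurable h) (s t : ℝ) (hst : s ≤ t) :
    ∫⁻ r in Set.Icc s t,
        (∫⁻ θ in Set.Icc (-τ) 0, ENNReal.ofReal (exp (η * r)) * h (r + θ) ∂pm) ≤
      ENNReal.ofReal (exp (η * τ)) *
        ∫⁻ r in Set.Icc (s - τ) t, ENNReal.ofReal (exp (η * r)) * h r := by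
  set g : ℝ → ENNReal := fun x => ENNReal.ofReal (exp (η * x)) * h x with hg
  have hgm : Measurable g :=
    (ENNReal.measurable_ofReal.comp
      (Real.measurable_exp.comp (measurable_const.mul measurable_id))).mul hh
  set C : ENNReal := ∫⁻ r in Set.Icc (s - τ) t, g r with hC
  -- pointwise bound in the inner integral
  have step1 : ∀ r : ℝ,
      (∫⁻ θ in Set.Icc (-τ) 0, ENNReal.ofReal (exp (η * r)) * h (r + θ) ∂pm)
        ≤ ∫⁻ θ in Set.Icc (-τ) 0, ENNReal.ofReal (exp (η * τ)) * g (r + θ) ∂pm := by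
    intro r
    refine setLIntegral_mono' measurableSet_Icc ?_
    intro θ hθ
    rw [hg]
    simp only [← mul_assoc, ← ENNReal.ofReal_mul (exp_nonneg _), ← Real.exp_add]
    gcongr
    have := mul_nonneg hη (show (0:ℝ) ≤ τ + θ by linarith [hθ.1])
    nlinarith
  calc
    ∫⁻ r in Set.Icc s t,
        (∫⁻ θ in Set.Icc (-τ) 0, ENNReal.ofReal (exp (η * r)) * h (r + θ) ∂pm)
      ≤ ∫⁻ r in Set.Icc s t,
          (∫⁻ θ in Set.Icc (-τ) 0, ENNReal.ofReal (exp (η * τ)) * g (r + θ) ∂pm) :=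
        lintegral_mono fun r => step1 r
    _ = ENNReal.ofReal (exp (η * τ)) *
          ∫⁻ r in Set.Icc s t, (∫⁻ θ in Set.Icc (-τ) 0, g (r + θ) ∂pm) := by
        have inner : ∀ r, (∫⁻ θ in Set.Icc (-τ) 0, ENNReal.ofReal (exp (η * τ)) * g (r + θ) ∂pm)
            = ENNReal.ofReal (exp (η * τ)) * ∫⁻ θ in Set.Icc (-τ) 0, g (r + θ) ∂pm := fun r =>
          lintegral_const_mul _ (hgm.comp (measurable_const_add r))
        rw [lintegral_congr inner, lintegral_const_mul]
        exact Measurable.lintegral_prod_right' (hgm.comp measurable_add)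
    _ ≤ ENNReal.ofReal (exp (η * τ)) * C := by
        gcongr
        rw [lintegral_lintegral_swap (f := fun r θ => g (r + θ))
          ((hgm.comp measurable_add).aemeasurable)]
        have key : ∀ θ ∈ Set.Icc (-τ) 0,
            (∫⁻ r in Set.Icc s t, g (r + θ)) ≤ C := by
          intro θ hθ
          have heq : (∫⁻ r in Set.Icc s t, g (r + θ))
              = ∫⁻ x in Set.Icc (s + θ) (t + θ), g x := by
            rw [← lintegral_indicator measurableSet_Icc,
                ← lintegral_indicator measurableSet_Icc,
                ← lintegral_add_right_eq_self
                  (fun x => (Set.Icc (s + θ) (t + θ)).indicator g x) θ]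
            congr 1; funext r
            by_cases hr : r ∈ Set.Icc s t
            · rw [Set.indicator_of_mem hr, Set.indicator_of_mem
                (by constructor <;> [exact add_le_add_left hr.1 θ;
                     exact add_le_add_left hr.2 θ])]
            · rw [Set.indicator_of_notMem hr, Set.indicator_of_notMem (by
                intro hx
                exact hr ⟨le_of_add_le_add_right hx.1, le_of_add_le_add_right hx.2⟩)]
          rw [heq, hC]
          refine lintegral_mono_set ?_
          intro x hx
          exact ⟨le_trans (by linarith [hθ.1]) hx.1, le_trans hx.2 (by linarith [hθ.2])⟩
        calc (∫⁻ θ in Set.Icc (-τ) 0, ∫⁻ r in Set.Icc s t, g (r + θ) ∂volume ∂pm)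
            ≤ ∫⁻ _ in Set.Icc (-τ) 0, C ∂pm := setLIntegral_mono' measurableSet_Icc key
          _ = C * pm (Set.Icc (-τ) 0) := by rw [setLIntegral_const]
          _ ≤ C * 1 := by gcongr; exact prob_le_one
          _ = C := mul_one C
end
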